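/- For any i, j ∈ 𝔖 with i ≺ j and ε > 0 there exists δ₁ > 0 such that for every δ ∈ (0, δ₁), every x ∈ W_i and every unit vector e ∈ S¹, there exist x' ∈ ℝ² and a unit vector e' with ‖x' − x‖ ≤ εδ, ‖e' − e‖ ≤ ε, and [x', x' + δe'] ⊆ W_j. -/

import Mathlib

open Filter

/-- Membership in the index set 𝔖: real sequences with `1 ≤ i r < N r` and `i r / N r → 0`. -/
def SSeq (N : ℕ → ℕ) (i : ℕ → ℝ) : Prop :=
  (∀ r, 1 ≤ i r ∧ i r < N r) ∧
  Tendsto (fun r => i r / (N r : ℝ)) atTop (nhds 0)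

/-- The strict relation: `i ≺ j` iff `i r > j r` for all `r` and `i r / j r → ∞`. -/
def Prec (i j : ℕ → ℝ) : Prop :=
  (∀ r, i r > j r) ∧ Tendsto (fun r => i r / j r) atTop atTop

/-- `i ≼ j` iff `i ≺ j` or `i = j`. -/
def Preceq (i j : ℕ → ℝ) : Prop := Prec i j ∨ i = j


/-- `dSeq N r = 1/(N_1 ⋯ N_r)` (with `dSeq N 0 = 1`), indices shifted to start at 0. -/
noncomputable def dSeq (N : ℕ → ℕ) : ℕ → ℝ := fun r => (∏ k ∈ Finset.range r, (N k : ℝ))⁻¹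

/-- The Euclidean norm on the plane `ℝ × ℝ`. -/
noncomputable def eNorm (v : ℝ × ℝ) : ℝ := Real.sqrt (v.1 ^ 2 + v.2 ^ 2)

/-- The set `W_i`: the complement of the union, over all levels `r` and all centres `c` in the
lattice `C_r = d_{r-1}((1/2,1/2)+ℤ²)`, of the open squares of side `i_r d_r` centred at `c`. -/
def Wset (N : ℕ → ℕ) (i : ℕ → ℝ) : Set (ℝ × ℝ) :=
  {x | ∀ r : ℕ, ∀ z : ℤ × ℤ,
    ¬ (|x.1 - dSeq N r * (1 / 2 + (z.1 : ℝ))| < i r * dSeq N (r + 1) / 2 ∧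
       |x.2 - dSeq N r * (1 / 2 + (z.2 : ℝ))| < i r * dSeq N (r + 1) / 2)}
/-- 1D step lemma -/
lemma step1d (α d w s ℓ ℓ' : ℝ) (hw : 0 < w) (hℓ' : 0 ≤ ℓ')
    (h1 : ℓ + w ≤ d) (h2 : w + 2 * ℓ' ≤ ℓ) :
    ∃ s', s ≤ s' ∧ s' + ℓ' ≤ s + ℓ ∧
      ∀ c ∈ Set.Icc s' (s' + ℓ'), ∀ m : ℤ, w / 2 ≤ |c - (α + m * d)| := by
  have hℓ : 0 ≤ ℓ := by nlinarith
  have hd : 0 < d := by nlinarith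
  set mid := s + ℓ / 2 with hmid
  set m₀ : ℤ := round ((mid - α) / d) with hm₀
  set γ : ℝ := α + m₀ * d with hγ
  have hγmid : |γ - mid| ≤ d / 2 := by
    have h := abs_sub_round ((mid - α) / d)
    rw [abs_sub_comm] at h
    have he : γ - mid = ((m₀ : ℝ) - (mid - α) / d) * d := by field_simp [hγ]; ring
    rw [he, abs_mul, abs_of_pos hd]
    calc |(m₀ : ℝ) - (mid - α) / d| * d ≤ (1/2) * d :=
            mul_le_mul_of_nonneg_right h hd.le
      _ = d / 2 := by ring
  have key : ∀ c, s ≤ c → c ≤ s + ℓ → ∀ m : ℤ, m ≠ m₀ → w / 2 ≤ |c - (α + m * d)| := by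
    intro c hc1 hc2 m hm
    have h3 : |c - mid| ≤ ℓ / 2 := by
      rw [abs_le]; constructor <;> [skip; skip] <;> simp only [hmid] <;> linarith
    have h4 : d ≤ |(α + m * d) - γ| := by
      have he : (α + m * d) - γ = ((m - m₀ : ℤ) : ℝ) * d := by push_cast [hγ]; ring
      rw [he, abs_mul, abs_of_pos hd]
      have h5 : (1 : ℝ) ≤ |((m - m₀ : ℤ) : ℝ)| := by
        rw [← Int.cast_abs]
        exact_mod_cast Int.one_le_abs (sub_ne_zero.mpr hm)
      nlinarith
    have t1 : |(α + m * d) - γ| ≤ |(α + m * d) - c| + |c - γ| := abs_sub_le _ c _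
    have t2 : |c - γ| ≤ |c - mid| + |mid - γ| := abs_sub_le _ mid _
    rw [abs_sub_comm] at hγmid
    rw [abs_sub_comm]
    linarith
  rcases le_or_gt γ mid with hcase | hcase
  · refine ⟨max s (γ + w / 2), le_max_left _ _, ?_, ?_⟩
    · have : γ + w / 2 + ℓ' ≤ s + ℓ := by
        have := abs_le.mp hγmid
        simp only [hmid] at *; linarith [this.2]
      rcases max_cases s (γ + w/2) with ⟨h,_⟩ | ⟨h,_⟩ <;> rw [h] <;> linarith
    · rintro c ⟨hc1, hc2⟩ m
      have hcs : s ≤ c := le_trans (le_max_left _ _) hc1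
      have hcg : γ + w / 2 ≤ c := le_trans (le_max_right _ _) hc1
      have hce : c ≤ s + ℓ := by
        have : γ + w / 2 + ℓ' ≤ s + ℓ := by
          have := abs_le.mp hγmid
          simp only [hmid] at *; linarith [this.2]
        rcases max_cases s (γ + w/2) with ⟨h,_⟩ | ⟨h,_⟩ <;> rw [h] at hc2 <;> linarith
      rcases eq_or_ne m m₀ with rfl | hm
      · rw [← hγ, abs_sub_comm]; rw [abs_of_nonpos (by linarith)]; linarith
      · exact key c hcs hce m hm
  · refine ⟨min (s + ℓ) (γ - w / 2) - ℓ', ?_, ?_, ?_⟩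
    · have : s ≤ γ - w / 2 - ℓ' := by
        have := abs_le.mp hγmid
        simp only [hmid] at *; linarith [this.1]
      rcases min_cases (s + ℓ) (γ - w/2) with ⟨h,_⟩ | ⟨h,_⟩ <;> rw [h] <;> linarith
    · have := min_le_left (s + ℓ) (γ - w/2); linarith
    · rintro c ⟨hc1, hc2⟩ m
      have hcg : c ≤ γ - w / 2 := by
        have := min_le_right (s + ℓ) (γ - w/2); linarith
      have hcs : s ≤ c := by
        have : s ≤ γ - w / 2 - ℓ' := by
          have := abs_le.mp hγmid
          simp only [hmid] at *; linarith [this.1]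
        rcases min_cases (s + ℓ) (γ - w/2) with ⟨h,_⟩ | ⟨h,_⟩ <;> rw [h] at hc1 <;> linarith
      have hce : c ≤ s + ℓ := by
        have := min_le_left (s + ℓ) (γ - w/2); linarith
      rcases eq_or_ne m m₀ with rfl | hm
      · rw [← hγ, abs_of_nonpos (by linarith)]; linarith
      · exact key c hcs hce m hm

lemma SW_nested (α d w ℓ : ℕ → ℝ) (s₀ : ℝ)
    (hw : ∀ k, 0 < w k) (hℓ : ∀ k, 0 ≤ ℓ k)
    (h1 : ∀ k, ℓ k + w k ≤ d k) (h2 : ∀ k, w k + 2 * ℓ (k + 1) ≤ ℓ k) :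
    ∃ c, s₀ ≤ c ∧ c ≤ s₀ + ℓ 0 ∧ ∀ k, ∀ m : ℤ, w k / 2 ≤ |c - (α k + m * d k)| := by
  have hstep : ∀ k (t : ℝ), ∃ s', t ≤ s' ∧ s' + ℓ (k + 1) ≤ t + ℓ k ∧
      ∀ c ∈ Set.Icc s' (s' + ℓ (k + 1)), ∀ m : ℤ, w k / 2 ≤ |c - (α k + m * d k)| :=
    fun k t => step1d (α k) (d k) (w k) t (ℓ k) (ℓ (k + 1)) (hw k) (hℓ (k + 1)) (h1 k) (h2 k)
  choose F hF1 hF2 hF3 using hstep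
  set s : ℕ → ℝ := fun k => Nat.rec s₀ (fun k sk => F k sk) k with hs
  have hssucc : ∀ k, s (k + 1) = F k (s k) := fun k => rfl
  have mono : Monotone s := monotone_nat_of_le_succ (fun k => hF1 k (s k))
  have anti : Antitone (fun k => s k + ℓ k) :=
    antitone_nat_of_succ_le (fun k => hF2 k (s k))
  have hub : ∀ k m, s k ≤ s m + ℓ m := by
    intro k m
    rcases le_total k m with h | h
    · exact le_trans (mono h) (le_add_of_nonneg_right (hℓ m))
    · exact le_trans (le_add_of_nonneg_right (hℓ k)) (anti h)
  have bdd : BddAbove (Set.range s) := ⟨s 0 + ℓ 0, by rintro _ ⟨k, rfl⟩; exact hub k 0⟩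
  set c := ⨆ k, s k with hc
  have hcge : ∀ k, s k ≤ c := fun k => le_ciSup bdd k
  have hcle : ∀ k, c ≤ s k + ℓ k := fun k => ciSup_le (fun m => hub m k)
  exact ⟨c, hcge 0, hcle 0, fun k m => hF3 k (s k) c ⟨hcge (k + 1), hcle (k + 1)⟩ m⟩

lemma SW_minrange (f : ℕ → ℝ) (h : ∀ r, 0 < f r) (R : ℕ) :
    ∃ b > 0, ∀ r < R, b ≤ f r := by
  induction R with
  | zero => exact ⟨1, one_pos, fun r hr => absurd hr (Nat.not_lt_zero r)⟩
  | succ R ih =>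
      obtain ⟨b, hb, hble⟩ := ih
      refine ⟨min b (f R), lt_min hb (h R), fun r hr => ?_⟩
      rcases Nat.lt_succ_iff_lt_or_eq.mp hr with h' | rfl
      · exact le_trans (min_le_left _ _) (hble r h')
      · exact min_le_right _ _

lemma SW_dSeq_pos (N : ℕ → ℕ) (hN : ∀ r, 1 < N r) (r : ℕ) : 0 < dSeq N r := by
  unfold dSeq
  apply inv_pos.mpr
  apply Finset.prod_pos
  intro k _
  exact_mod_cast Nat.lt_of_lt_of_le Nat.zero_lt_one (hN k).le

lemma SW_dSeq_le_one (N : ℕ → ℕ) (hN : ∀ r, 1 < N r) (r : ℕ) : dSeq N r ≤ 1 := by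
  unfold dSeq
  apply inv_le_one_of_one_le₀
  rw [← Nat.cast_prod]
  exact_mod_cast Nat.one_le_iff_ne_zero.mpr (Finset.prod_ne_zero_iff.mpr
    (fun k _ => Nat.pos_iff_ne_zero.mp (lt_trans Nat.zero_lt_one (hN k))))

lemma SW_dSeq_succ (N : ℕ → ℕ) (r : ℕ) : dSeq N (r + 1) = dSeq N r / N r := by
  unfold dSeq
  rw [Finset.prod_range_succ, mul_inv, div_eq_mul_inv]

lemma eNorm_nonneg (v : ℝ × ℝ) : 0 ≤ eNorm v := Real.sqrt_nonneg _

lemma SW_abs_fst_le (v : ℝ × ℝ) : |v.1| ≤ eNorm v := by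
  rw [eNorm, ← Real.sqrt_sq_eq_abs]
  exact Real.sqrt_le_sqrt (by nlinarith [sq_nonneg v.2])

lemma SW_abs_snd_le (v : ℝ × ℝ) : |v.2| ≤ eNorm v := by
  rw [eNorm, ← Real.sqrt_sq_eq_abs]
  exact Real.sqrt_le_sqrt (by nlinarith [sq_nonneg v.1])

lemma eNorm_sq (v : ℝ × ℝ) : eNorm v ^ 2 = v.1 ^ 2 + v.2 ^ 2 :=
  Real.sq_sqrt (by positivity)

lemma eNorm_add_le (v u : ℝ × ℝ) : eNorm (v + u) ≤ eNorm v + eNorm u := by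
  have cs : v.1 * u.1 + v.2 * u.2 ≤ eNorm v * eNorm u := by
    rcases le_or_gt (v.1 * u.1 + v.2 * u.2) 0 with h | h
    · exact le_trans h (mul_nonneg (eNorm_nonneg v) (eNorm_nonneg u))
    · have h2 : (v.1 * u.1 + v.2 * u.2) ^ 2 ≤ (v.1 ^ 2 + v.2 ^ 2) * (u.1 ^ 2 + u.2 ^ 2) := by
        nlinarith [sq_nonneg (v.1 * u.2 - v.2 * u.1)]
      calc v.1 * u.1 + v.2 * u.2 = Real.sqrt ((v.1 * u.1 + v.2 * u.2) ^ 2) :=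
            (Real.sqrt_sq h.le).symm
        _ ≤ Real.sqrt ((v.1 ^ 2 + v.2 ^ 2) * (u.1 ^ 2 + u.2 ^ 2)) := Real.sqrt_le_sqrt h2
        _ = eNorm v * eNorm u := by
            rw [eNorm, eNorm, Real.sqrt_mul (by positivity)]
  have hb : (v + u).1 ^ 2 + (v + u).2 ^ 2 ≤ (eNorm v + eNorm u) ^ 2 := by
    have e1 := eNorm_sq v
    have e2 := eNorm_sq u
    have : (v + u).1 = v.1 + u.1 := rfl
    rw [this, show (v + u).2 = v.2 + u.2 from rfl]
    nlinarith [cs]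
  calc eNorm (v + u) = Real.sqrt ((v + u).1 ^ 2 + (v + u).2 ^ 2) := rfl
    _ ≤ Real.sqrt ((eNorm v + eNorm u) ^ 2) := Real.sqrt_le_sqrt hb
    _ = eNorm v + eNorm u :=
          Real.sqrt_sq (add_nonneg (eNorm_nonneg v) (eNorm_nonneg u))

lemma eNorm_smul (t : ℝ) (v : ℝ × ℝ) : eNorm (t • v) = |t| * eNorm v := by
  rw [eNorm, eNorm, show (t • v).1 = t * v.1 from rfl, show (t • v).2 = t * v.2 from rfl]
  rw [mul_pow, mul_pow, ← mul_add, Real.sqrt_mul (sq_nonneg t), Real.sqrt_sq_eq_abs]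

lemma eNorm_neg (v : ℝ × ℝ) : eNorm (-v) = eNorm v := by
  rw [eNorm, eNorm, show (-v).1 = -v.1 from rfl, show (-v).2 = -v.2 from rfl,
    neg_pow, neg_pow]
  ring_nf

set_option maxHeartbeats 2000000 in
lemma SW_dir (e : ℝ × ℝ) (he : eNorm e = 1) (Q : ℕ) (hQ : 2 ≤ Q) :
    ∃ a b : ℤ, 1 ≤ |(a : ℝ)| + |(b : ℝ)| ∧ |(a : ℝ)| + |(b : ℝ)| ≤ 2 * (Q : ℝ) + 1 ∧
      (Q : ℝ) - 1 ≤ Real.sqrt ((a : ℝ) ^ 2 + (b : ℝ) ^ 2) ∧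
      eNorm (((a : ℝ) / Real.sqrt ((a : ℝ) ^ 2 + (b : ℝ) ^ 2),
              (b : ℝ) / Real.sqrt ((a : ℝ) ^ 2 + (b : ℝ) ^ 2)) - e) ≤ 2 / ((Q : ℝ) - 1) := by
  set a : ℤ := round ((Q : ℝ) * e.1) with ha
  set b : ℤ := round ((Q : ℝ) * e.2) with hb
  set u : ℝ × ℝ := ((a : ℝ), (b : ℝ)) with hu
  have hQ1 : (1 : ℝ) ≤ (Q : ℝ) - 1 := by
    have : (2 : ℝ) ≤ (Q : ℝ) := by exact_mod_cast hQ
    linarith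
  have hra : |(a : ℝ) - (Q : ℝ) * e.1| ≤ 1 / 2 := by
    rw [abs_sub_comm]; exact abs_sub_round _
  have hrb : |(b : ℝ) - (Q : ℝ) * e.2| ≤ 1 / 2 := by
    rw [abs_sub_comm]; exact abs_sub_round _
  have hdiff : eNorm (u - (Q : ℝ) • e) ≤ 1 := by
    have h1 : (u - (Q : ℝ) • e).1 = (a : ℝ) - (Q : ℝ) * e.1 := rfl
    have h2 : (u - (Q : ℝ) • e).2 = (b : ℝ) - (Q : ℝ) * e.2 := rfl
    rw [eNorm, h1, h2]
    have : ((a : ℝ) - (Q : ℝ) * e.1) ^ 2 + ((b : ℝ) - (Q : ℝ) * e.2) ^ 2 ≤ 1 := by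
      nlinarith [abs_nonneg ((a : ℝ) - (Q : ℝ) * e.1), abs_nonneg ((b : ℝ) - (Q : ℝ) * e.2),
        sq_abs ((a : ℝ) - (Q : ℝ) * e.1), sq_abs ((b : ℝ) - (Q : ℝ) * e.2)]
    calc Real.sqrt _ ≤ Real.sqrt 1 := Real.sqrt_le_sqrt this
      _ = 1 := Real.sqrt_one
  have hQe : eNorm ((Q : ℝ) • e) = (Q : ℝ) := by
    rw [eNorm_smul, he, mul_one, abs_of_nonneg (by positivity)]
  set n : ℝ := Real.sqrt ((a : ℝ) ^ 2 + (b : ℝ) ^ 2) with hn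
  have hnu : eNorm u = n := rfl
  have hQn : (Q : ℝ) - 1 ≤ n := by
    have t : eNorm ((Q : ℝ) • e) ≤ eNorm u + eNorm ((Q : ℝ) • e - u) := by
      have : (Q : ℝ) • e = u + ((Q : ℝ) • e - u) := by abel
      calc eNorm ((Q : ℝ) • e) = eNorm (u + ((Q : ℝ) • e - u)) := by rw [← this]
        _ ≤ _ := eNorm_add_le _ _
    have hsym : eNorm ((Q : ℝ) • e - u) = eNorm (u - (Q : ℝ) • e) := by
      rw [← eNorm_neg, neg_sub]
    rw [hQe, hnu, hsym] at t
    linarith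
  have hnpos : 0 < n := lt_of_lt_of_le (by linarith) hQn
  have hn1 : 1 ≤ n := le_trans hQ1 hQn
  have hnQ : |n - (Q : ℝ)| ≤ 1 := by
    have t : eNorm u ≤ eNorm ((Q : ℝ) • e) + eNorm (u - (Q : ℝ) • e) := by
      have : u = (Q : ℝ) • e + (u - (Q : ℝ) • e) := by abel
      calc eNorm u = eNorm ((Q : ℝ) • e + (u - (Q : ℝ) • e)) := by rw [← this]
        _ ≤ _ := eNorm_add_le _ _
    rw [hQe, hnu] at t
    rw [abs_le]
    constructor <;> linarith
  have habs_a : |(a : ℝ)| ≤ (Q : ℝ) + 1 / 2 := by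
    have h1 : |(Q : ℝ) * e.1| ≤ (Q : ℝ) := by
      rw [abs_mul, abs_of_nonneg (by positivity : (0:ℝ) ≤ (Q:ℝ))]
      have := SW_abs_fst_le e
      rw [he] at this
      nlinarith [this, abs_nonneg e.1]
    calc |(a : ℝ)| = |((a : ℝ) - (Q : ℝ) * e.1) + (Q : ℝ) * e.1| := by ring_nf
      _ ≤ |(a : ℝ) - (Q : ℝ) * e.1| + |(Q : ℝ) * e.1| := abs_add_le _ _
      _ ≤ 1 / 2 + (Q : ℝ) := by linarith
      _ = (Q : ℝ) + 1 / 2 := by ring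
  have habs_b : |(b : ℝ)| ≤ (Q : ℝ) + 1 / 2 := by
    have h1 : |(Q : ℝ) * e.2| ≤ (Q : ℝ) := by
      rw [abs_mul, abs_of_nonneg (by positivity : (0:ℝ) ≤ (Q:ℝ))]
      have := SW_abs_snd_le e
      rw [he] at this
      nlinarith [this, abs_nonneg e.2]
    calc |(b : ℝ)| = |((b : ℝ) - (Q : ℝ) * e.2) + (Q : ℝ) * e.2| := by ring_nf
      _ ≤ |(b : ℝ) - (Q : ℝ) * e.2| + |(Q : ℝ) * e.2| := abs_add_le _ _
      _ ≤ 1 / 2 + (Q : ℝ) := by linarith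
      _ = (Q : ℝ) + 1 / 2 := by ring
  have hnab : n ≤ |(a : ℝ)| + |(b : ℝ)| := by
    rw [hn]
    calc Real.sqrt ((a : ℝ) ^ 2 + (b : ℝ) ^ 2) ≤ Real.sqrt ((|(a : ℝ)| + |(b : ℝ)|) ^ 2) := by
          apply Real.sqrt_le_sqrt
          nlinarith [sq_abs (a : ℝ), sq_abs (b : ℝ), abs_nonneg (a : ℝ), abs_nonneg (b : ℝ)]
      _ = |(a : ℝ)| + |(b : ℝ)| := Real.sqrt_sq (by positivity)
  refine ⟨a, b, le_trans hn1 hnab, by linarith, hQn, ?_⟩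
  have hsplit : ((a : ℝ) / n, (b : ℝ) / n) - e =
      (1 / n) • (u - (Q : ℝ) • e) + ((Q : ℝ) / n - 1) • e := by
    have h1 : ((a : ℝ) / n, (b : ℝ) / n) = (1 / n) • u := by
      refine Prod.ext ?_ ?_ <;> simp [hu] <;> ring
    rw [h1]
    refine Prod.ext ?_ ?_ <;>
      simp only [Prod.fst_sub, Prod.snd_sub, Prod.fst_add, Prod.snd_add, Prod.smul_fst,
        Prod.smul_snd, smul_eq_mul] <;> field_simp <;> ring
  calc eNorm (((a : ℝ) / n, (b : ℝ) / n) - e)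
      ≤ eNorm ((1 / n) • (u - (Q : ℝ) • e)) + eNorm (((Q : ℝ) / n - 1) • e) := by
        rw [hsplit]; exact eNorm_add_le _ _
    _ = |1 / n| * eNorm (u - (Q : ℝ) • e) + |(Q : ℝ) / n - 1| * 1 := by
        rw [eNorm_smul, eNorm_smul, he]
    _ ≤ (1 / n) * 1 + (1 / n) * 1 := by
        have e1 : |1 / n| = 1 / n := abs_of_pos (by positivity)
        have e2 : |(Q : ℝ) / n - 1| ≤ 1 / n := by
          have h' : (Q : ℝ) / n - 1 = ((Q : ℝ) - n) / n := by field_simp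
          rw [h', abs_div, abs_of_pos hnpos, abs_sub_comm]
          exact (div_le_div_iff_of_pos_right hnpos).mpr hnQ
        have h1n : (0 : ℝ) ≤ 1 / n := by positivity
        have g1 : (1 / n) * eNorm (u - (Q : ℝ) • e) ≤ (1 / n) * 1 :=
          mul_le_mul_of_nonneg_left hdiff h1n
        rw [e1]
        linarith [g1, e2]
    _ = 2 / n := by ring
    _ ≤ 2 / ((Q : ℝ) - 1) := by
        apply div_le_div_of_nonneg_left (by norm_num) (by linarith) hQn
set_option maxHeartbeats 4000000 in
theorem stmt10 (N : ℕ → ℕ) (hN : ∀ r, 1 < N r)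
    (hNtend : Filter.Tendsto (fun r => (N r : ℝ)) Filter.atTop Filter.atTop)
    (i j : ℕ → ℝ) (hi : SSeq N i) (hj : SSeq N j) (hij : Prec i j)
    (ε : ℝ) (hε : 0 < ε) :
    ∃ δ₁ > 0, ∀ δ ∈ Set.Ioo 0 δ₁, ∀ x ∈ Wset N i, ∀ e : ℝ × ℝ, eNorm e = 1 →
      ∃ x' e' : ℝ × ℝ, eNorm e' = 1 ∧ eNorm (x' - x) ≤ ε * δ ∧ eNorm (e' - e) ≤ ε ∧
        segment ℝ x' (x' + δ • e') ⊆ Wset N j := by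
  obtain ⟨hi1, hi2⟩ := hi
  obtain ⟨hj1, hj2⟩ := hj
  obtain ⟨hij1, hij2⟩ := hij
  set Q : ℕ := ⌈2 / ε⌉₊ + 2 with hQdef
  have hQ2 : 2 ≤ Q := Nat.le_add_left 2 _
  have hQR : (2 : ℝ) ≤ (Q : ℝ) := by exact_mod_cast hQ2
  have hQε : 2 / ((Q : ℝ) - 1) ≤ ε := by
    have h1 : 2 / ε ≤ (⌈2 / ε⌉₊ : ℝ) := Nat.le_ceil _
    have h2 : 2 / ε ≤ (Q : ℝ) - 1 := by
      have : ((⌈2 / ε⌉₊ : ℝ)) + 2 = (Q : ℝ) := by rw [hQdef]; push_cast; ring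
      linarith
    rw [div_le_iff₀ (by linarith : (0 : ℝ) < (Q : ℝ) - 1)]
    calc (2 : ℝ) = ε * (2 / ε) := by field_simp
      _ ≤ ε * ((Q : ℝ) - 1) := mul_le_mul_of_nonneg_left h2 hε.le
  set K₀ : ℝ := 2 * (Q : ℝ) + 1 with hK₀def
  have hK₀pos : 0 < K₀ := by positivity
  set M₀ : ℝ := 1 + 2 * (K₀ + 1) * (1 + ε) / ε with hM₀def
  have hevA : ∀ᶠ r in atTop, M₀ ≤ i r / j r := hij2.eventually_ge_atTop M₀
  have hevB : ∀ᶠ r in atTop, j r / (N r : ℝ) < 1 / (100 * K₀) :=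
    hj2.eventually (gt_mem_nhds (by positivity))
  have hevC : ∀ᶠ r in atTop, (5 : ℝ) ≤ (N r : ℝ) := hNtend.eventually_ge_atTop 5
  obtain ⟨R, hR⟩ := eventually_atTop.mp ((hevA.and hevB).and hevC)
  obtain ⟨δ₁, hδ₁pos, hδ₁⟩ := SW_minrange
    (fun r => (i r - j r) * dSeq N (r + 1) / (2 * (1 + ε)))
    (fun r => by
      have h1 := SW_dSeq_pos N hN (r + 1)
      have h2 := hij1 r
      have : 0 < i r - j r := by linarith [h2]
      positivity) R
  refine ⟨δ₁, hδ₁pos, ?_⟩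
  rintro δ ⟨hδ0, hδδ₁⟩ x hx e he
  obtain ⟨a, b, hK1, hK2, hQn, happrox⟩ := SW_dir e he Q hQ2
  set n := Real.sqrt ((a : ℝ) ^ 2 + (b : ℝ) ^ 2) with hndef
  have hn1 : (1 : ℝ) ≤ n := le_trans (by linarith) hQn
  have hnpos : 0 < n := lt_of_lt_of_le one_pos hn1
  set K := |(a : ℝ)| + |(b : ℝ)| with hKdef
  have hKK₀ : K ≤ K₀ := by rw [hKdef, hK₀def]; linarith
  have hnn : n ^ 2 = (a : ℝ) ^ 2 + (b : ℝ) ^ 2 := Real.sq_sqrt (by positivity)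
  have han : |(a : ℝ)| ≤ n := by
    rw [hndef, ← Real.sqrt_sq_eq_abs]
    exact Real.sqrt_le_sqrt (by nlinarith [sq_nonneg (b : ℝ)])
  have hbn : |(b : ℝ)| ≤ n := by
    rw [hndef, ← Real.sqrt_sq_eq_abs]
    exact Real.sqrt_le_sqrt (by nlinarith [sq_nonneg (a : ℝ)])
  set e' : ℝ × ℝ := ((a : ℝ) / n, (b : ℝ) / n) with he'def
  have he'norm : eNorm e' = 1 := by
    rw [eNorm, show e'.1 = (a : ℝ) / n from rfl, show e'.2 = (b : ℝ) / n from rfl]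
    have : ((a : ℝ) / n) ^ 2 + ((b : ℝ) / n) ^ 2 = 1 := by
      field_simp
      linarith [hnn]
    rw [this, Real.sqrt_one]
  clear_value Q K₀ M₀ n K e'
  -- existence of an unsafe level
  have hjpos : ∀ r, 0 < j r := fun r => lt_of_lt_of_le one_pos (hj1 r).1
  have hipos : ∀ r, 0 < i r := fun r => lt_of_lt_of_le one_pos (hi1 r).1
  have hNpos : ∀ r, (0 : ℝ) < (N r : ℝ) := fun r => by
    have := hN r; positivity
  have huns : ∃ r, ¬ ((1 + ε) * δ ≤ (i r - j r) * dSeq N (r + 1) / 2) := by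
    have h0 : 0 < (1 + ε) * δ := by positivity
    obtain ⟨r, hr⟩ := (hi2.eventually (gt_mem_nhds h0)).exists
    refine ⟨r, not_le.mpr ?_⟩
    have hd1 : dSeq N r ≤ 1 := SW_dSeq_le_one N hN r
    have hdpos : 0 < dSeq N r := SW_dSeq_pos N hN r
    have hds : dSeq N (r + 1) = dSeq N r / N r := SW_dSeq_succ N r
    have hstep1 : (i r - j r) * dSeq N (r + 1) ≤ i r / N r := by
      rw [hds]
      have e1 : 0 < dSeq N r / (N r : ℝ) := div_pos hdpos (hNpos r)
      calc (i r - j r) * (dSeq N r / N r) ≤ i r * (dSeq N r / N r) := by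
            apply mul_le_mul_of_nonneg_right (by linarith [hjpos r]) e1.le
        _ = (i r / N r) * dSeq N r := by ring
        _ ≤ (i r / N r) * 1 :=
            mul_le_mul_of_nonneg_left hd1 (div_nonneg (hipos r).le (hNpos r).le)
        _ = i r / N r := mul_one _
    have hr' : i r / (N r : ℝ) < (1 + ε) * δ := hr
    linarith
  set R' := Nat.find huns with hR'def
  have hR'uns : ¬ ((1 + ε) * δ ≤ (i R' - j R') * dSeq N (R' + 1) / 2) := Nat.find_spec huns
  have hR'safe : ∀ r < R', (1 + ε) * δ ≤ (i r - j r) * dSeq N (r + 1) / 2 :=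
    fun r hr => not_not.mp (Nat.find_min huns hr)
  have hRR' : R ≤ R' := by
    by_contra hc
    push_neg at hc
    apply hR'uns
    have h1 := hδ₁ R' hc
    have h2 : δ < (i R' - j R') * dSeq N (R' + 1) / (2 * (1 + ε)) := lt_of_lt_of_le hδδ₁ h1
    have h3 : 0 < (i R' - j R') * dSeq N (R' + 1) := by
      have := hij1 R'
      have := SW_dSeq_pos N hN (R' + 1)
      have : 0 < i R' - j R' := by linarith [hij1 R']
      positivity
    rw [lt_div_iff₀ (by positivity)] at h2
    linarith
  clear_value R'
  -- facts at level r ≥ R'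
  have hfacts : ∀ k : ℕ, M₀ ≤ i (R' + k) / j (R' + k) ∧
      j (R' + k) / (N (R' + k) : ℝ) < 1 / (100 * K₀) ∧ (5 : ℝ) ≤ (N (R' + k) : ℝ) := by
    intro k
    have := hR (R' + k) (le_trans hRR' (Nat.le_add_right _ _))
    exact ⟨this.1.1, this.1.2, this.2⟩
  set c₀ : ℝ := (b : ℝ) * x.1 - (a : ℝ) * x.2 with hc₀def
  set hh : ℝ := ε * δ * n with hhdef
  have hhpos : 0 < hh := by rw [hhdef]; positivity
  set ℓ : ℕ → ℝ := fun k => if k = 0 then min (2 * hh) (dSeq N R' / 2)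
    else dSeq N (R' + k) / 2 with hℓdef
  clear_value c₀ hh
  have hwle : ∀ k : ℕ, K * j (R' + k) * dSeq N (R' + k + 1) ≤ dSeq N (R' + k) / 100 := by
    intro k
    set r := R' + k
    have hds : dSeq N (r + 1) = dSeq N r / N r := SW_dSeq_succ N r
    have hdpos : 0 < dSeq N r := SW_dSeq_pos N hN r
    have hNp := hNpos r
    have hjN := (hfacts k).2.1
    have hK0 : 0 < K := lt_of_lt_of_le one_pos hK1
    have e1 : K * j r * dSeq N (r + 1) = (K * (j r / N r)) * dSeq N r := by
      rw [hds]
      field_simp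
    rw [e1]
    have e2 : K * (j r / N r) ≤ K₀ * (j r / N r) :=
      mul_le_mul_of_nonneg_right hKK₀ (div_nonneg (hjpos r).le (hNpos r).le)
    have e3 : K₀ * (j r / N r) ≤ K₀ * (1 / (100 * K₀)) :=
      mul_le_mul_of_nonneg_left hjN.le hK₀pos.le
    have e4 : K₀ * (1 / (100 * K₀)) = 1 / 100 := by
      rw [mul_one_div, mul_comm (100 : ℝ) K₀, ← div_div, div_self hK₀pos.ne']
    have e5 : K * (j r / N r) ≤ 1 / 100 := by linarith
    have e6 : (K * (j r / N r)) * dSeq N r ≤ (1 / 100) * dSeq N r :=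
      mul_le_mul_of_nonneg_right e5 hdpos.le
    linarith
  have hd5 : ∀ k : ℕ, dSeq N (R' + k + 1) ≤ dSeq N (R' + k) / 5 := by
    intro k
    set r := R' + k
    have hds : dSeq N (r + 1) = dSeq N r / N r := SW_dSeq_succ N r
    have hdpos : 0 < dSeq N r := SW_dSeq_pos N hN r
    have h5 := (hfacts k).2.2
    rw [hds, div_le_div_iff₀ (hNpos r) (by norm_num : (0:ℝ) < 5)]
    have := mul_le_mul_of_nonneg_left h5 hdpos.le
    linarith
  have hwpos : ∀ k : ℕ, 0 < K * j (R' + k) * dSeq N (R' + k + 1) := by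
    intro k
    have := SW_dSeq_pos N hN (R' + k + 1)
    have := hjpos (R' + k)
    have hK0 : 0 < K := lt_of_lt_of_le one_pos hK1
    positivity
  have hℓle : ∀ k : ℕ, ℓ k ≤ dSeq N (R' + k) / 2 := by
    intro k
    rw [hℓdef]
    rcases Nat.eq_zero_or_pos k with rfl | hk
    · simpa using min_le_right _ _
    · simp [Nat.pos_iff_ne_zero.mp hk]
  have hℓnonneg : ∀ k : ℕ, 0 ≤ ℓ k := by
    intro k
    rw [hℓdef]
    rcases Nat.eq_zero_or_pos k with rfl | hk
    · simp only [if_pos rfl]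
      exact le_min (by positivity) (by linarith [SW_dSeq_pos N hN R'])
    · simp only [if_neg (Nat.pos_iff_ne_zero.mp hk)]
      linarith [SW_dSeq_pos N hN (R' + k)]
  have hcond1 : ∀ k : ℕ, ℓ k + K * j (R' + k) * dSeq N (R' + k + 1) ≤ dSeq N (R' + k) := by
    intro k
    have := hwle k
    have := hℓle k
    have := SW_dSeq_pos N hN (R' + k)
    linarith
  have htrans : K * j R' * dSeq N (R' + 1) + dSeq N (R' + 1) ≤ 2 * hh := by
    have hd'pos : 0 < dSeq N (R' + 1) := SW_dSeq_pos N hN (R' + 1)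
    have hiMj : M₀ * j R' ≤ i R' := by
      have h1 := (hfacts 0).1
      rw [Nat.add_zero] at h1
      rw [le_div_iff₀ (hjpos R')] at h1
      exact h1
    have h1 : (M₀ - 1) * (j R' * dSeq N (R' + 1)) < 2 * (1 + ε) * δ := by
      push_neg at hR'uns
      have h2 : (M₀ - 1) * j R' ≤ i R' - j R' := by
        have : M₀ * j R' - j R' ≤ i R' - j R' := by linarith [hiMj]
        linarith [this]
      have h3 : ((M₀ - 1) * j R') * dSeq N (R' + 1) ≤ (i R' - j R') * dSeq N (R' + 1) :=
        mul_le_mul_of_nonneg_right h2 hd'pos.le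
      have h4 : (M₀ - 1) * (j R' * dSeq N (R' + 1))
          = ((M₀ - 1) * j R') * dSeq N (R' + 1) := by ring
      linarith [h3]
    have h2 : (K₀ + 1) * (j R' * dSeq N (R' + 1)) < ε * δ := by
      have hA : M₀ - 1 = 2 * (K₀ + 1) * (1 + ε) / ε := by rw [hM₀def]; ring
      rw [hA] at h1
      have h1' : 2 * (K₀ + 1) * (1 + ε) * (j R' * dSeq N (R' + 1)) < 2 * (1 + ε) * δ * ε := by
        have hm := mul_lt_mul_of_pos_right h1 hε
        calc 2 * (K₀ + 1) * (1 + ε) * (j R' * dSeq N (R' + 1))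
            = 2 * (K₀ + 1) * (1 + ε) / ε * (j R' * dSeq N (R' + 1)) * ε := by
              field_simp
          _ < 2 * (1 + ε) * δ * ε := hm
      by_contra hcon
      push_neg at hcon
      have hm2 := mul_le_mul_of_nonneg_left hcon
        (by positivity : (0 : ℝ) ≤ 2 * (1 + ε))
      linarith [h1', hm2]
    have h3 : K * j R' * dSeq N (R' + 1) + dSeq N (R' + 1) ≤
        (K₀ + 1) * (j R' * dSeq N (R' + 1)) := by
      have hj1' : 1 ≤ j R' := (hj1 R').1
      have p1 : K * (j R' * dSeq N (R' + 1)) ≤ K₀ * (j R' * dSeq N (R' + 1)) :=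
        mul_le_mul_of_nonneg_right hKK₀ (mul_nonneg (hjpos R').le hd'pos.le)
      have p2 : dSeq N (R' + 1) * 1 ≤ dSeq N (R' + 1) * j R' :=
        mul_le_mul_of_nonneg_left hj1' hd'pos.le
      linarith [p1, p2]
    have h4 : ε * δ ≤ hh := by
      rw [hhdef]
      have := mul_le_mul_of_nonneg_left hn1 (by positivity : (0 : ℝ) ≤ ε * δ)
      linarith [this]
    linarith
  have hcond2 : ∀ k : ℕ, K * j (R' + k) * dSeq N (R' + k + 1) + 2 * ℓ (k + 1) ≤ ℓ k := by
    intro k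
    have hℓk1 : ℓ (k + 1) = dSeq N (R' + (k + 1)) / 2 := by
      rw [hℓdef]; simp
    have hgen : K * j (R' + k) * dSeq N (R' + k + 1) + dSeq N (R' + k + 1) ≤
        dSeq N (R' + k) / 2 := by
      have := hwle k
      have := hd5 k
      have := SW_dSeq_pos N hN (R' + k)
      linarith
    rw [hℓk1, show R' + (k + 1) = R' + k + 1 from rfl]
    rcases Nat.eq_zero_or_pos k with rfl | hk
    · rw [hℓdef]
      simp only [if_pos rfl]
      simp only [Nat.add_zero] at hgen ⊢
      apply le_min
      · linarith [htrans]
      · linarith [hgen]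
    · rw [hℓdef]
      simp only [if_neg (Nat.pos_iff_ne_zero.mp hk)]
      linarith
  obtain ⟨c, hcge, hcle, hcav⟩ := SW_nested
    (fun k => dSeq N (R' + k) * (((b : ℝ) - (a : ℝ)) / 2))
    (fun k => dSeq N (R' + k))
    (fun k => K * j (R' + k) * dSeq N (R' + k + 1))
    ℓ (c₀ - hh) hwpos hℓnonneg hcond1 hcond2
  have hℓ0le : ℓ 0 ≤ 2 * hh := by rw [hℓdef]; simpa using min_le_left _ _
  set t : ℝ := (c - c₀) / n with htdef
  have htle : |t| ≤ ε * δ := by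
    rw [htdef, abs_div, abs_of_pos hnpos, div_le_iff₀ hnpos]
    have h1 : |c - c₀| ≤ hh := by
      rw [abs_le]
      constructor <;> linarith [hcge, hcle, hℓ0le]
    rw [hhdef] at h1
    linarith
  set x' : ℝ × ℝ := (x.1 + t * (b : ℝ) / n, x.2 - t * (a : ℝ) / n) with hx'def
  have hx'x : eNorm (x' - x) ≤ ε * δ := by
    have h1 : (x' - x).1 = t * (b : ℝ) / n := by
      rw [hx'def]; show x.1 + t * (b : ℝ) / n - x.1 = _; ring
    have h2 : (x' - x).2 = -(t * (a : ℝ) / n) := by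
      rw [hx'def]; show x.2 - t * (a : ℝ) / n - x.2 = _; ring
    rw [eNorm, h1, h2]
    have h3 : (t * (b : ℝ) / n) ^ 2 + (-(t * (a : ℝ) / n)) ^ 2 = t ^ 2 := by
      have : (t * (b : ℝ) / n) ^ 2 + (-(t * (a : ℝ) / n)) ^ 2
          = t ^ 2 * ((a : ℝ) ^ 2 + (b : ℝ) ^ 2) / n ^ 2 := by ring
      have hab : (0 : ℝ) < (a : ℝ) ^ 2 + (b : ℝ) ^ 2 := by
        rw [← hnn]; exact pow_pos hnpos 2
      rw [this, hnn, mul_div_assoc, div_self hab.ne', mul_one]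
    rw [h3, Real.sqrt_sq_eq_abs]
    exact htle
  have hcx' : (b : ℝ) * x'.1 - (a : ℝ) * x'.2 = c := by
    rw [hx'def]
    show (b : ℝ) * (x.1 + t * (b : ℝ) / n) - (a : ℝ) * (x.2 - t * (a : ℝ) / n) = c
    have e1 : (b : ℝ) * (x.1 + t * (b : ℝ) / n) - (a : ℝ) * (x.2 - t * (a : ℝ) / n)
        = c₀ + t * (((a : ℝ) ^ 2 + (b : ℝ) ^ 2) / n) := by
      rw [hc₀def]; ring
    rw [e1, ← hnn, htdef]
    field_simp
    ring
  refine ⟨x', e', he'norm, hx'x, le_trans happrox hQε, ?_⟩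
  intro y hy
  rw [segment_eq_image] at hy
  obtain ⟨θ, hθ, hyeq⟩ := hy
  have hyv : y = x' + (θ * δ) • e' := by
    rw [← hyeq]
    refine Prod.ext ?_ ?_ <;>
      simp only [Prod.fst_add, Prod.snd_add, Prod.fst_sub, Prod.snd_sub, Prod.smul_fst,
        Prod.smul_snd, smul_eq_mul] <;> ring
  have hy1 : y.1 = x'.1 + θ * δ * ((a : ℝ) / n) := by
    rw [hyv, he'def]
    show x'.1 + θ * δ * ((a : ℝ) / n) = _
    rfl
  have hy2 : y.2 = x'.2 + θ * δ * ((b : ℝ) / n) := by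
    rw [hyv, he'def]
    show x'.2 + θ * δ * ((b : ℝ) / n) = _
    rfl
  intro r z
  rintro ⟨hA, hB⟩
  set C₁ := dSeq N r * (1 / 2 + (z.1 : ℝ)) with hC₁def
  set C₂ := dSeq N r * (1 / 2 + (z.2 : ℝ)) with hC₂def
  have hθ0 : (0 : ℝ) ≤ θ := hθ.1
  have hθ1 : θ ≤ 1 := hθ.2
  have hyx1 : |y.1 - x.1| ≤ (1 + ε) * δ := by
    have e1 : y.1 - x.1 = t * (b : ℝ) / n + θ * δ * ((a : ℝ) / n) := by
      rw [hy1, hx'def]; show x.1 + t * (b : ℝ) / n + _ - x.1 = _; ring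
    rw [e1]
    calc |t * (b : ℝ) / n + θ * δ * ((a : ℝ) / n)|
        ≤ |t * (b : ℝ) / n| + |θ * δ * ((a : ℝ) / n)| := abs_add_le _ _
      _ ≤ ε * δ + δ := by
          have b1 : |t * (b : ℝ) / n| ≤ |t| := by
            rw [abs_div, abs_mul, abs_of_pos hnpos, div_le_iff₀ hnpos]
            exact mul_le_mul_of_nonneg_left hbn (abs_nonneg t)
          have b2 : |θ * δ * ((a : ℝ) / n)| ≤ δ := by
            rw [abs_mul, abs_mul, abs_div, abs_of_pos hnpos]
            have g1 : |(a : ℝ)| / n ≤ 1 := by rw [div_le_one hnpos]; exact han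
            have hθa : |θ| ≤ 1 := by rw [abs_of_nonneg hθ0]; exact hθ1
            have hδa : |δ| = δ := abs_of_pos hδ0
            calc |θ| * |δ| * (|(a : ℝ)| / n) ≤ |θ| * |δ| * 1 :=
                  mul_le_mul_of_nonneg_left g1
                    (mul_nonneg (abs_nonneg θ) (abs_nonneg δ))
              _ = |θ| * |δ| := mul_one _
              _ ≤ 1 * |δ| := mul_le_mul_of_nonneg_right hθa (abs_nonneg δ)
              _ = δ := by rw [one_mul, hδa]
          linarith [htle]
      _ ≤ (1 + ε) * δ := by linarith
  have hyx2 : |y.2 - x.2| ≤ (1 + ε) * δ := by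
    have e1 : y.2 - x.2 = -(t * (a : ℝ) / n) + θ * δ * ((b : ℝ) / n) := by
      rw [hy2, hx'def]; show x.2 - t * (a : ℝ) / n + _ - x.2 = _; ring
    rw [e1]
    calc |(-(t * (a : ℝ) / n)) + θ * δ * ((b : ℝ) / n)|
        ≤ |(-(t * (a : ℝ) / n))| + |θ * δ * ((b : ℝ) / n)| := abs_add_le _ _
      _ ≤ ε * δ + δ := by
          have b1 : |(-(t * (a : ℝ) / n))| ≤ |t| := by
            rw [abs_neg, abs_div, abs_mul, abs_of_pos hnpos, div_le_iff₀ hnpos]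
            exact mul_le_mul_of_nonneg_left han (abs_nonneg t)
          have b2 : |θ * δ * ((b : ℝ) / n)| ≤ δ := by
            rw [abs_mul, abs_mul, abs_div, abs_of_pos hnpos]
            have g1 : |(b : ℝ)| / n ≤ 1 := by rw [div_le_one hnpos]; exact hbn
            have hθa : |θ| ≤ 1 := by rw [abs_of_nonneg hθ0]; exact hθ1
            have hδa : |δ| = δ := abs_of_pos hδ0
            calc |θ| * |δ| * (|(b : ℝ)| / n) ≤ |θ| * |δ| * 1 :=
                  mul_le_mul_of_nonneg_left g1
                    (mul_nonneg (abs_nonneg θ) (abs_nonneg δ))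
              _ = |θ| * |δ| := mul_one _
              _ ≤ 1 * |δ| := mul_le_mul_of_nonneg_right hθa (abs_nonneg δ)
              _ = δ := by rw [one_mul, hδa]
          linarith [htle]
      _ ≤ (1 + ε) * δ := by linarith
  rcases lt_or_ge r R' with hr | hr
  · -- coarse levels
    have hsafe := hR'safe r hr
    rcases not_and_or.mp (hx r z) with hc1 | hc1 <;> push_neg at hc1
    · have e1 : |x.1 - C₁| ≤ |x.1 - y.1| + |y.1 - C₁| := abs_sub_le _ _ _
      rw [abs_sub_comm] at hyx1
      have := hc1
      rw [← hC₁def] at this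
      linarith [hA, this]
    · have e1 : |x.2 - C₂| ≤ |x.2 - y.2| + |y.2 - C₂| := abs_sub_le _ _ _
      rw [abs_sub_comm] at hyx2
      have := hc1
      rw [← hC₂def] at this
      linarith [hB, this]
  · -- fine levels
    set k := r - R' with hkdef
    have hrk : R' + k = r := by omega
    have hcav' := hcav k ((b * z.1 - a * z.2 : ℤ))
    rw [hrk] at hcav'
    have hcy : (b : ℝ) * y.1 - (a : ℝ) * y.2 = c := by
      rw [hy1, hy2]
      have : (b : ℝ) * (x'.1 + θ * δ * ((a : ℝ) / n)) - (a : ℝ) * (x'.2 + θ * δ * ((b : ℝ) / n))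
          = (b : ℝ) * x'.1 - (a : ℝ) * x'.2 := by ring
      rw [this, hcx']
    have hαm : dSeq N r * (((b : ℝ) - (a : ℝ)) / 2) + ((b * z.1 - a * z.2 : ℤ) : ℝ) * dSeq N r
        = (b : ℝ) * C₁ - (a : ℝ) * C₂ := by
      rw [hC₁def, hC₂def]; push_cast; ring
    rw [hαm] at hcav'
    -- now the strict bound
    set B : ℝ := j r * dSeq N (r + 1) / 2 with hBdef
    have hBpos : 0 < B := by
      rw [hBdef]
      have := SW_dSeq_pos N hN (r + 1)
      have := hjpos r
      positivity
    have hA' : |y.1 - C₁| < B := hA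
    have hB' : |y.2 - C₂| < B := hB
    have hstrict : |c - ((b : ℝ) * C₁ - (a : ℝ) * C₂)| < K * j r * dSeq N (r + 1) / 2 := by
      have e1 : c - ((b : ℝ) * C₁ - (a : ℝ) * C₂)
          = (b : ℝ) * (y.1 - C₁) - (a : ℝ) * (y.2 - C₂) := by
        rw [← hcy]; ring
      rw [e1]
      have e2 : |(b : ℝ) * (y.1 - C₁) - (a : ℝ) * (y.2 - C₂)|
          ≤ |(b : ℝ)| * |y.1 - C₁| + |(a : ℝ)| * |y.2 - C₂| := by
        calc |(b : ℝ) * (y.1 - C₁) - (a : ℝ) * (y.2 - C₂)|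
            ≤ |(b : ℝ) * (y.1 - C₁)| + |(a : ℝ) * (y.2 - C₂)| := abs_sub _ _
          _ = |(b : ℝ)| * |y.1 - C₁| + |(a : ℝ)| * |y.2 - C₂| := by rw [abs_mul, abs_mul]
      have e3 : K * j r * dSeq N (r + 1) / 2 = K * B := by rw [hBdef]; ring
      rw [e3]
      set m' : ℝ := min (B - |y.1 - C₁|) (B - |y.2 - C₂|) with hm'def
      have hm'pos : 0 < m' := lt_min (by linarith) (by linarith)
      have f1 : |(b : ℝ)| * (B - |y.1 - C₁|) ≥ |(b : ℝ)| * m' :=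
        mul_le_mul_of_nonneg_left (min_le_left _ _) (abs_nonneg _)
      have f2 : |(a : ℝ)| * (B - |y.2 - C₂|) ≥ |(a : ℝ)| * m' :=
        mul_le_mul_of_nonneg_left (min_le_right _ _) (abs_nonneg _)
      have f3 : |(b : ℝ)| * m' + |(a : ℝ)| * m' = K * m' := by rw [hKdef]; ring
      have f4 : (1 : ℝ) * m' ≤ K * m' := mul_le_mul_of_nonneg_right hK1 hm'pos.le
      have f5 : K * B = |(a : ℝ)| * B + |(b : ℝ)| * B := by rw [hKdef]; ring
      have f6 : |(b : ℝ)| * (B - |y.1 - C₁|) = |(b : ℝ)| * B - |(b : ℝ)| * |y.1 - C₁| := by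
        ring
      have f7 : |(a : ℝ)| * (B - |y.2 - C₂|) = |(a : ℝ)| * B - |(a : ℝ)| * |y.2 - C₂| := by
        ring
      linarith [e2, f1, f2, f3, f4, f5, f6, f7, hm'pos]
    linarith [hcav', hstrict]
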